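/- If q = 3, gcd(k, q−1) = 1 (i.e., k is odd), and 3 does not divide k, then every matrix in M_n(𝔽_3) can be written as A^k + B^k with A, B ∈ GL_n(𝔽_3). -/

import Mathlib

open Matrix

section Aux

variable {n : ℕ} {F : Type*} [Field F]

lemma nilp_aux (N : Matrix (Fin n) (Fin n) F)
    (hN : ∀ i j : Fin n, (j : ℕ) ≤ (i : ℕ) → N i j = 0) :
    ∀ (m : ℕ) (i j : Fin n), (j : ℕ) < (i : ℕ) + m → (N ^ m) i j = 0 := by
  intro m
  induction m with
  | zero =>
    intro i j h
    rw [pow_zero]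
    exact Matrix.one_apply_ne (Fin.ne_of_val_ne (by omega))
  | succ m ih =>
    intro i j h
    rw [pow_succ', Matrix.mul_apply]
    apply Finset.sum_eq_zero
    intro l _
    by_cases hl : (l : ℕ) ≤ (i : ℕ)
    · rw [hN i l hl, zero_mul]
    · rw [ih l j (by omega), mul_zero]

lemma tri_pow_eq_one (hn : 0 < n) [CharP F 3] (X : Matrix (Fin n) (Fin n) F)
    (hX : ∀ i j : Fin n, j < i → X i j = 0) (hd : ∀ i, X i i = 1 ∨ X i i = -1) :
    X ^ (2 * 3 ^ n) = 1 := by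
  haveI : Nonempty (Fin n) := ⟨⟨0, hn⟩⟩
  haveI : Fact (Nat.Prime 3) := ⟨by norm_num⟩
  set Y := X * X with hYdef
  have hY : ∀ i j : Fin n, j < i → Y i j = 0 := by
    intro i j hij
    rw [hYdef, Matrix.mul_apply]
    apply Finset.sum_eq_zero
    intro l _
    by_cases hl : l < i
    · rw [hX i l hl, zero_mul]
    · have : j < l := lt_of_lt_of_le hij (not_lt.1 hl)
      rw [hX l j this, mul_zero]
  have hYd : ∀ i, Y i i = 1 := by
    intro i
    rw [hYdef, Matrix.mul_apply]
    rw [Finset.sum_eq_single i]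
    · rcases hd i with h | h <;> rw [h] <;> ring
    · intro l _ hl
      rcases lt_or_gt_of_ne hl with h | h
      · rw [hX i l h, zero_mul]
      · rw [hX l i h, mul_zero]
    · intro h; exact absurd (Finset.mem_univ i) h
  set N := Y - 1 with hNdef
  have hN : ∀ i j : Fin n, (j : ℕ) ≤ (i : ℕ) → N i j = 0 := by
    intro i j hij
    rcases eq_or_lt_of_le hij with h | h
    · have : j = i := Fin.ext h
      subst this
      simp [hNdef, hYd j]
    · have hji : j < i := h
      rw [hNdef, Matrix.sub_apply, hY i j hji, Matrix.one_apply_ne hji.ne', sub_zero]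
  have hNn : N ^ (3 ^ n) = 0 := by
    have h1 : N ^ n = 0 := by
      ext i j
      exact nilp_aux N hN n i j (by omega)
    have h2 : 3 ^ n = n + (3 ^ n - n) := by
      have := Nat.lt_pow_self (n := n) (by norm_num : (1:ℕ) < 3)
      omega
    rw [h2, pow_add, h1, zero_mul]
  have hY1 : Y = 1 + N := by rw [hNdef]; abel
  have hYpow : Y ^ (3 ^ n) = 1 := by
    rw [hY1, add_pow_char_pow_of_commute 3 n (Commute.one_left N), one_pow, hNn, add_zero]
  calc X ^ (2 * 3 ^ n) = (X * X) ^ (3 ^ n) := by rw [pow_mul, sq]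
    _ = 1 := hYpow

lemma exists_pow_eq {G : Type*} [Monoid G] (u : G) (m k : ℕ) (hm : 1 < m)
    (hu : u ^ m = 1) (hco : Nat.Coprime k m) : ∃ e : ℕ, (u ^ e) ^ k = u := by
  refine ⟨k ^ (Nat.totient m - 1), ?_⟩
  have ht : 0 < Nat.totient m := Nat.totient_pos.2 (by omega)
  have hkk : k ^ (Nat.totient m - 1) * k = k ^ Nat.totient m := by
    rw [← pow_succ]
    congr 1
    omega
  have hmod : k ^ Nat.totient m % m = 1 := by
    have h := Nat.ModEq.pow_totient hco
    unfold Nat.ModEq at h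
    rwa [Nat.mod_eq_of_lt hm] at h
  rw [← pow_mul, hkk]
  conv_lhs => rw [← Nat.div_add_mod (k ^ Nat.totient m) m]
  rw [pow_add, pow_mul, hu, one_pow, one_mul, hmod, pow_one]

end Aux

theorem stmt1 (F : Type*) [Field F] [Fintype F] (hF : Fintype.card F = 3)
    (k n : ℕ) (hk : 1 ≤ k) (hn : 2 ≤ n)
    (hkq : Nat.gcd k (3 - 1) = 1) (hk3 : ¬ (3 ∣ k)) :
    ∀ M : Matrix (Fin n) (Fin n) F, ∃ A B : Matrix (Fin n) (Fin n) F,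
      IsUnit A ∧ IsUnit B ∧ M = A ^ k + B ^ k := by
  haveI : CharP F 3 := by
    have := charP_of_card_eq_prime (p := 3) (R := F) hF
    exact this
  have h3 : (3 : F) = 0 := by exact_mod_cast CharP.cast_eq_zero F 3
  -- classification of elements of F
  have hclass : ∀ x : F, x = 0 ∨ x = 1 ∨ x = -1 := by
    intro x
    let e := ZMod.ringEquiv F hF
    have : ∀ y : ZMod 3, y = 0 ∨ y = 1 ∨ y = -1 := by decide
    rcases this (e.symm x) with h | h | h
    · left; have := congrArg e h; simpa using this
    · right; left; have := congrArg e h; simpa using this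
    · right; right; have := congrArg e h; simpa using this
  -- splitting of every element as a sum of two nonzero elements
  have hsplit : ∀ x : F, ∃ a b : F, a ≠ 0 ∧ b ≠ 0 ∧ a + b = x := by
    intro x
    rcases hclass x with h | h | h
    · exact ⟨1, -1, one_ne_zero, neg_ne_zero.2 one_ne_zero, by rw [h]; ring⟩
    · refine ⟨-1, -1, neg_ne_zero.2 one_ne_zero, neg_ne_zero.2 one_ne_zero, ?_⟩
      rw [h]; linear_combination -h3
    · refine ⟨1, 1, one_ne_zero, one_ne_zero, ?_⟩
      rw [h]; linear_combination h3
  intro M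
  choose a b ha hb hab using fun i : Fin n => hsplit (M i i)
  -- the upper and lower triangular parts
  set U : Matrix (Fin n) (Fin n) F :=
    fun i j => if i < j then M i j else if i = j then a i else 0 with hUdef
  set L : Matrix (Fin n) (Fin n) F :=
    fun i j => if i < j then 0 else if i = j then b i else M i j with hLdef
  have hsum : M = U + L := by
    ext i j
    rcases lt_trichotomy i j with h | h | h
    · rw [Matrix.add_apply]; simp [hUdef, hLdef, Matrix.add_apply, h, ne_of_lt h]
    · subst h
      rw [Matrix.add_apply]; simp [hUdef, hLdef, Matrix.add_apply, lt_irrefl, hab i]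
    · rw [Matrix.add_apply]; simp [hUdef, hLdef, Matrix.add_apply, not_lt.2 (le_of_lt h), (ne_of_lt h).symm]
  have hne : ∀ x : F, x ≠ 0 → x = 1 ∨ x = -1 := by
    intro x hx
    rcases hclass x with h | h | h
    · exact absurd h hx
    · exact Or.inl h
    · exact Or.inr h
  set m := 2 * 3 ^ n with hmdef
  have hm1 : 1 < m := by
    have : 0 < 3 ^ n := by positivity
    omega
  have hco : Nat.Coprime k m := by
    apply Nat.Coprime.mul_right
    · exact hkq
    · exact Nat.Coprime.pow_right n
        (((Nat.Prime.coprime_iff_not_dvd (by norm_num)).2 hk3).symm)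
  -- U is a k-th power of a unit power of itself
  have hUt : ∀ i j : Fin n, j < i → U i j = 0 := by
    intro i j hij
    simp [hUdef, not_lt.2 hij.le, hij.ne']
  have hUd : ∀ i, U i i = 1 ∨ U i i = -1 := by
    intro i
    have : U i i = a i := by simp [hUdef]
    rw [this]
    exact hne (a i) (ha i)
  have hUpow : U ^ m = 1 := tri_pow_eq_one (by omega) U hUt hUd
  have hLt : ∀ i j : Fin n, j < i → Lᵀ i j = 0 := by
    intro i j hij
    rw [Matrix.transpose_apply]; simp [hLdef, Matrix.transpose_apply, hij]
  have hLd : ∀ i, Lᵀ i i = 1 ∨ Lᵀ i i = -1 := by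
    intro i
    have : Lᵀ i i = b i := by rw [Matrix.transpose_apply]; simp [hLdef, Matrix.transpose_apply]
    rw [this]
    exact hne (b i) (hb i)
  have hLTpow : Lᵀ ^ m = 1 := tri_pow_eq_one (by omega) Lᵀ hLt hLd
  have hLpow : L ^ m = 1 := by
    have h := congrArg Matrix.transpose hLTpow
    rwa [← Matrix.transpose_pow, Matrix.transpose_transpose, Matrix.transpose_one] at h
  have hUunit : IsUnit U := IsUnit.of_pow_eq_one hUpow (by omega)
  have hLunit : IsUnit L := IsUnit.of_pow_eq_one hLpow (by omega)
  obtain ⟨e1, he1⟩ := exists_pow_eq U m k hm1 hUpow hco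
  obtain ⟨e2, he2⟩ := exists_pow_eq L m k hm1 hLpow hco
  exact ⟨U ^ e1, L ^ e2, hUunit.pow e1, hLunit.pow e2, by rw [he1, he2]; exact hsum⟩
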